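/- arXiv:2104.01847 — 2 statements merged into one kernel-verified Lean document; each statement's English description precedes it below -/
import Mathlib

section
/- The positive fixed point φ⁺(a) of tanh(aφ) = φ is strictly increasing in a on (1, ∞). -/
open Real Set

lemma tanh_hasDerivAt (x : ℝ) :
    HasDerivAt Real.tanh (1 / Real.cosh x ^ 2) x := by
  have h : HasDerivAt Real.tanh
      ((Real.cosh x * Real.cosh x - Real.sinh x * Real.sinh x) / Real.cosh x ^ 2) x := by
    have := (Real.hasDerivAt_sinh x).div (Real.hasDerivAt_cosh x) (Real.cosh_pos x).ne'
    refine HasDerivAt.congr_of_eventuallyEq this ?_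
    filter_upwards with y using (Real.tanh_eq_sinh_div_cosh y)
  convert h using 1
  have := Real.cosh_sq_sub_sinh_sq x
  ring_nf
  nlinarith [Real.cosh_sq_sub_sinh_sq x]

lemma tanh_strictMono : StrictMono Real.tanh :=
  strictMono_of_deriv_pos fun x => by
    rw [(tanh_hasDerivAt x).deriv]
    positivity

lemma tanh_div_strictAntiOn :
    StrictAntiOn (fun t : ℝ => Real.tanh t / t) (Set.Ioi 0) := by
  apply strictAntiOn_of_deriv_neg (convex_Ioi 0)
  · have hc : Continuous Real.tanh :=
      continuous_iff_continuousAt.2 fun x => (tanh_hasDerivAt x).continuousAt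
    exact ContinuousOn.div hc.continuousOn continuousOn_id (fun x hx => ne_of_gt hx)
  · intro x hx
    rw [interior_Ioi] at hx
    have hx0 : (0:ℝ) < x := hx
    have hd : HasDerivAt (fun t : ℝ => Real.tanh t / t)
        ((1 / Real.cosh x ^ 2 * x - Real.tanh x * 1) / x ^ 2) x :=
      (tanh_hasDerivAt x).div (hasDerivAt_id x) hx0.ne'
    rw [hd.deriv]
    apply div_neg_of_neg_of_pos _ (by positivity)
    have hc := Real.cosh_pos x
    have hs : x < Real.sinh x := Real.self_lt_sinh_iff.2 hx0
    have h1 : (1:ℝ) ≤ Real.cosh x := Real.one_le_cosh x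
    rw [Real.tanh_eq_sinh_div_cosh]
    have key : x < Real.sinh x * Real.cosh x := by nlinarith
    rw [sub_neg, mul_one, div_mul_eq_mul_div, div_lt_div_iff₀ (by positivity) hc]
    nlinarith

/-- The positive fixed point `φ⁺(a)` of `tanh (a φ) = φ` is strictly increasing in `a` on
`(1, ∞)`. -/
theorem tanh_pos_fixed_point_strictMono (φp : ℝ → ℝ)
    (h : ∀ a : ℝ, 1 < a → 0 < φp a ∧ Real.tanh (a * φp a) = φp a) :
    StrictMonoOn φp (Set.Ioi 1) := by
  intro a ha b hb hab
  simp only [Set.mem_Ioi] at ha hb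
  obtain ⟨hxa, hfa⟩ := h a ha
  obtain ⟨hxb, hfb⟩ := h b hb
  have ha0 : (0:ℝ) < a := by linarith
  have hb0 : (0:ℝ) < b := by linarith
  have hax : (0:ℝ) < a * φp a := by positivity
  have hbx : (0:ℝ) < b * φp b := by positivity
  have hfa' : Real.tanh (a * φp a) / (a * φp a) = 1 / a := by
    rw [hfa]; field_simp
  have hfb' : Real.tanh (b * φp b) / (b * φp b) = 1 / b := by
    rw [hfb]; field_simp
  have hlt : a * φp a < b * φp b := by
    by_contra hle
    push_neg at hle
    rcases eq_or_lt_of_le hle with heq | hlt'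
    · have h2 : (1:ℝ)/b = 1/a := by rw [← hfa', ← hfb', heq]
      rw [div_eq_div_iff hb0.ne' ha0.ne'] at h2
      linarith
    · have h3 := tanh_div_strictAntiOn hbx hax hlt'
      simp only at h3
      rw [hfa', hfb'] at h3
      rw [div_lt_div_iff₀ ha0 hb0] at h3
      linarith
  have := tanh_strictMono hlt
  rwa [hfa, hfb] at this
end

section
/- For α > 1 with nonzero steady state φ⁺ (tanh(αφ⁺) = φ⁺), if Cβ·(1 − (φ⁺)²) < 1 and α·(1 − (φ⁺)²) < 1 and the discriminant (1 − (φ⁺)²)²(Cβ + α)² − 4Cβ(1 − (φ⁺)²) < 0, then both eigenvalues of the Jacobian at (φ⁺, 0) have modulus √(Cβ(1 − (φ⁺)²)) < 1, so the steady state is locally stable. -/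
/-- For `α > 1` with nonzero steady state `φ⁺`, if `Cβ(1 − (φ⁺)²) < 1`, `α(1 − (φ⁺)²) < 1`
and the discriminant `(1 − (φ⁺)²)²(Cβ + α)² − 4Cβ(1 − (φ⁺)²) < 0`, then both eigenvalues of
the Jacobian at `(φ⁺, 0)` have modulus `√(Cβ(1 − (φ⁺)²)) < 1`: the steady state is locally
stable. -/
theorem sentiment_return_nonzero_stable (α β C φp : ℝ) (hα : 1 < α) (hβ : 0 < β)
    (hC : 0 < C) (hφp : 0 < φp) (hfix : Real.tanh (α * φp) = φp)
    (h1 : C * β * (1 - φp ^ 2) < 1) (h2 : α * (1 - φp ^ 2) < 1)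
    (hdisc : (1 - φp ^ 2) ^ 2 * (C * β + α) ^ 2 - 4 * (C * β) * (1 - φp ^ 2) < 0) :
    (∀ x ∈ spectrum ℂ
        ((!![α * (1 - φp ^ 2), β * (1 - φp ^ 2);
            C * (α * (1 - φp ^ 2) - 1), C * β * (1 - φp ^ 2)]).map (Complex.ofReal ·)),
        ‖x‖ = Real.sqrt (C * β * (1 - φp ^ 2))) ∧
      Real.sqrt (C * β * (1 - φp ^ 2)) < 1 := by
  have hCβ : 0 < C * β := mul_pos hC hβ
  have hspos : 0 < 1 - φp ^ 2 := by
    by_contra h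
    push_neg at h
    nlinarith [sq_nonneg ((1 - φp ^ 2) * (C * β + α))]
  have hD0 : 0 ≤ C * β * (1 - φp ^ 2) := by positivity
  constructor
  · intro x hx
    rw [spectrum.mem_iff] at hx
    have hdet : ((x : ℂ) - (α * (1 - φp ^ 2) : ℝ)) * (x - (C * β * (1 - φp ^ 2) : ℝ))
        - (β * (1 - φp ^ 2) : ℝ) * (C * (α * (1 - φp ^ 2) - 1) : ℝ) = 0 := by
      by_contra hne
      apply hx
      apply (Matrix.isUnit_iff_isUnit_det _).mpr
      rw [isUnit_iff_ne_zero]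
      have : (algebraMap ℂ (Matrix (Fin 2) (Fin 2) ℂ) x -
          (!![α * (1 - φp ^ 2), β * (1 - φp ^ 2);
            C * (α * (1 - φp ^ 2) - 1), C * β * (1 - φp ^ 2)]).map (Complex.ofReal ·)).det
          = ((x : ℂ) - (α * (1 - φp ^ 2) : ℝ)) * (x - (C * β * (1 - φp ^ 2) : ℝ))
            - (β * (1 - φp ^ 2) : ℝ) * (C * (α * (1 - φp ^ 2) - 1) : ℝ) := by
        simp [Matrix.det_fin_two, Matrix.algebraMap_matrix_apply]
      rw [this]
      exact hne
    -- quadratic equation x^2 - T x + D = 0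
    set T : ℝ := (α + C * β) * (1 - φp ^ 2) with hT
    set D : ℝ := C * β * (1 - φp ^ 2) with hDdef
    have heq : (x : ℂ) ^ 2 - (T : ℝ) * x + (D : ℝ) = 0 := by
      push_cast [hT, hDdef] at hdet ⊢
      linear_combination hdet
    have heqc : ((starRingEnd ℂ) x) ^ 2 - (T : ℝ) * (starRingEnd ℂ) x + (D : ℝ) = 0 := by
      have := congrArg (starRingEnd ℂ) heq
      simpa using this
    have hfac : ((starRingEnd ℂ) x - x) * ((starRingEnd ℂ) x + x - (T : ℝ)) = 0 := by
      linear_combination heqc - heq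
    rcases mul_eq_zero.mp hfac with h | h
    · -- x is real, contradiction with discriminant
      exfalso
      have hxr : (starRingEnd ℂ) x = x := sub_eq_zero.mp h
      have him : x.im = 0 := Complex.conj_eq_iff_im.mp hxr
      have hre : x = (x.re : ℂ) := by
        exact (Complex.conj_eq_iff_re.mp hxr).symm
      rw [hre] at heq
      have hreal : x.re ^ 2 - T * x.re + D = 0 := by
        exact_mod_cast heq
      have hdisc' : T ^ 2 - 4 * D < 0 := by
        rw [hT, hDdef]; nlinarith
      nlinarith [sq_nonneg (2 * x.re - T)]
    · have hsum : (starRingEnd ℂ) x = (T : ℂ) - x := by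
        have := sub_eq_zero.mpr h
        linear_combination h
      have hmul : x * (starRingEnd ℂ) x = (D : ℂ) := by
        rw [hsum]
        linear_combination -heq
      have habs : ‖x‖ ^ 2 = D := by
        have := Complex.mul_conj x
        rw [this] at hmul
        have h2 : (Complex.normSq x : ℂ) = (D : ℂ) := hmul
        have h3 : Complex.normSq x = D := by exact_mod_cast h2
        rw [Complex.sq_norm]; exact h3
      rw [← habs, Real.sqrt_sq (norm_nonneg x)]
  · calc Real.sqrt (C * β * (1 - φp ^ 2)) < Real.sqrt 1 := by
          apply (Real.sqrt_lt_sqrt hD0 h1)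
       _ = 1 := Real.sqrt_one
end
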